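/- Let (X,T) be a topological dynamical system and μ ∈ M(X,T). If there exists a strictly increasing sequence A = {a_i} ⊆ ℕ such that (X,T) is μ-A-equicontinuous, then for every continuous f : X → ℝ the set {f∘T^{a_n} : n ∈ ℕ} is pre-compact in L²(μ), and consequently {g∘T^{a_n} : n ∈ ℕ} is pre-compact in L²(μ) for every g ∈ L²(μ). -/

import Mathlib

open MeasureTheory Filter Topology
open scoped ENNReal NNReal

lemma stmt11_key {X : Type*} [MetricSpace X] [CompactSpace X] [MeasurableSpace X]
    [BorelSpace X] (μ : Measure X) [IsProbabilityMeasure μ] (T : X ≃ₜ X)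
    (a : ℕ → ℕ)
    (heq : ∀ τ > (0 : ℝ), ∃ K : Set X, IsCompact K ∧
      μ K > ENNReal.ofReal (1 - τ) ∧ ∀ ε > (0 : ℝ), ∃ δ > (0 : ℝ),
      ∀ x ∈ K, ∀ y ∈ K, dist x y < δ →
        ∀ n : ℕ, dist ((⇑T)^[a n] x) ((⇑T)^[a n] y) < ε) :
    ∀ f : C(X, ℝ), ∀ ε > (0 : ℝ), ∃ F : Finset ℕ, ∀ n : ℕ, ∃ m ∈ F,
        eLpNorm (fun x => f ((⇑T)^[a n] x) - f ((⇑T)^[a m] x)) 2 μ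
          < ENNReal.ofReal ε := by
  intro f ε hε
  set M := ‖f‖ with hMdef
  have hM0 : 0 ≤ M := norm_nonneg f
  have hfb : ∀ x, |f x| ≤ M := fun x => f.norm_coe_le_norm x
  -- uniform continuity of f
  have hfu : UniformContinuous f := CompactSpace.uniformContinuous_of_continuous f.continuous
  rw [Metric.uniformContinuous_iff] at hfu
  obtain ⟨δ₀, hδ₀, hδ₀f⟩ := hfu (ε / 6) (by positivity)
  -- choice of τ
  set s : ℝ := ε / (2 * (2 * M + 1)) with hsdef
  have hs0 : 0 < s := by positivity
  set τ : ℝ := min (1 / 2) (s ^ 2) with hτdef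
  have hτ0 : 0 < τ := lt_min (by norm_num) (by positivity)
  obtain ⟨K, hKc, hKμ, hKe⟩ := heq τ hτ0
  obtain ⟨δ, hδ, hKδ⟩ := hKe δ₀ hδ₀
  -- finite cover of K by δ-balls with centers in K
  obtain ⟨t, htK, htfin, htcov⟩ :=
    totallyBounded_iff_subset.1 hKc.totallyBounded _ (Metric.dist_mem_uniformity hδ)
  haveI : Fintype t := htfin.fintype
  -- the evaluation map at centers
  set Φ : ℕ → (t → ℝ) := fun n i => f ((⇑T)^[a n] (i : X)) with hΦdef
  have hΦrange : Set.range Φ ⊆ Set.univ.pi fun _ => Set.Icc (-M) M := by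
    rintro _ ⟨n, rfl⟩ i _
    exact abs_le.1 (hfb _)
  have htb : TotallyBounded (Set.range Φ) :=
    ((isCompact_univ_pi fun _ => isCompact_Icc).totallyBounded).subset hΦrange
  obtain ⟨S, hSsub, hSfin, hScov⟩ :=
    totallyBounded_iff_subset.1 htb _
      (Metric.dist_mem_uniformity (show (0 : ℝ) < ε / 6 by positivity))
  have hex : ∀ y ∈ S, ∃ m, Φ m = y := fun y hy => hSsub hy
  choose! ψ hψ using hex
  refine ⟨hSfin.toFinset.image ψ, fun n => ?_⟩
  have hn : Φ n ∈ ⋃ y ∈ S, {x | dist x y < ε / 6} := hScov (Set.mem_range_self n)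
  obtain ⟨y, hy, hdy⟩ := Set.mem_iUnion₂.1 hn
  refine ⟨ψ y, Finset.mem_image_of_mem _ (hSfin.mem_toFinset.2 hy), ?_⟩
  set m := ψ y with hmdef
  have hdist : ∀ i : t, dist (Φ n i) (Φ m i) < ε / 6 := by
    intro i
    have h1 : dist (Φ n) (Φ m) < ε / 6 := by rw [hmdef, hψ y hy]; exact hdy
    exact lt_of_le_of_lt (dist_le_pi_dist (Φ n) (Φ m) i) h1
  -- pointwise bounds
  set q : X → ℝ := fun x => f ((⇑T)^[a n] x) - f ((⇑T)^[a m] x) with hqdef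
  have hqK : ∀ x ∈ K, |q x| ≤ ε / 2 := by
    intro x hx
    obtain ⟨i, hi, hdxi⟩ := Set.mem_iUnion₂.1 (htcov hx)
    have hiK : i ∈ K := htK hi
    have hdxi' : dist x i < δ := hdxi
    have h1 : |f ((⇑T)^[a n] x) - f ((⇑T)^[a n] i)| < ε / 6 := by
      rw [← Real.dist_eq]
      exact hδ₀f (hKδ x hx i hiK hdxi' n)
    have h2 : |f ((⇑T)^[a n] i) - f ((⇑T)^[a m] i)| < ε / 6 := by
      have := hdist ⟨i, hi⟩
      rwa [hΦdef, Real.dist_eq] at this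
    have h3 : |f ((⇑T)^[a m] i) - f ((⇑T)^[a m] x)| < ε / 6 := by
      rw [← Real.dist_eq]
      exact hδ₀f (hKδ i hiK x hx (by rw [dist_comm]; exact hdxi') m)
    have h4 : |q x| ≤ |f ((⇑T)^[a n] x) - f ((⇑T)^[a m] i)| +
        |f ((⇑T)^[a m] i) - f ((⇑T)^[a m] x)| := abs_sub_le _ _ _
    have h5 : |f ((⇑T)^[a n] x) - f ((⇑T)^[a m] i)| ≤
        |f ((⇑T)^[a n] x) - f ((⇑T)^[a n] i)| +
        |f ((⇑T)^[a n] i) - f ((⇑T)^[a m] i)| := abs_sub_le _ _ _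
    linarith
  have hqb : ∀ x, |q x| ≤ 2 * M := by
    intro x
    have h1 := hfb ((⇑T)^[a n] x)
    have h2 := hfb ((⇑T)^[a m] x)
    rw [hqdef]
    have := abs_sub (f ((⇑T)^[a n] x)) (f ((⇑T)^[a m] x))
    calc |f ((⇑T)^[a n] x) - f ((⇑T)^[a m] x)|
        ≤ |f ((⇑T)^[a n] x)| + |f ((⇑T)^[a m] x)| := abs_sub _ _
      _ ≤ 2 * M := by linarith
  -- measurability
  have hTc : ∀ k : ℕ, Continuous ((⇑T)^[k]) := fun k => T.continuous.iterate k
  have hqc : Continuous q := by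
    rw [hqdef]
    exact (f.continuous.comp (hTc (a n))).sub (f.continuous.comp (hTc (a m)))
  have hqm : AEStronglyMeasurable q μ := hqc.aestronglyMeasurable
  have hKmeas : MeasurableSet K := hKc.measurableSet
  -- measure of the complement
  have hKcomp : μ Kᶜ ≤ ENNReal.ofReal τ := by
    have h1 : μ Kᶜ = 1 - μ K := by
      rw [measure_compl hKmeas (measure_ne_top μ K), measure_univ]
    have hτ1 : τ ≤ 1 := le_trans (min_le_left _ _) (by norm_num)
    have h2 : (1 : ℝ≥0∞) - μ K ≤ 1 - ENNReal.ofReal (1 - τ) :=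
      tsub_le_tsub_left hKμ.le 1
    have h3 : (1 : ℝ≥0∞) - ENNReal.ofReal (1 - τ) = ENNReal.ofReal τ := by
      rw [← ENNReal.ofReal_one, ← ENNReal.ofReal_sub _ (by linarith)]
      norm_num
    rw [h1]; exact h2.trans_eq h3
  -- eLpNorm bounds
  have htoReal : (1 : ℝ) / (2 : ℝ≥0∞).toReal = (1 / 2 : ℝ) := by norm_num
  have h1 : eLpNorm (K.indicator q) 2 μ ≤ ENNReal.ofReal (ε / 2) := by
    have hpt : ∀ x, ‖K.indicator q x‖ ≤ ‖K.indicator (fun _ => ε / 2) x‖ := by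
      intro x
      by_cases hx : x ∈ K
      · simp only [Set.indicator_of_mem hx, Real.norm_eq_abs]
        calc |q x| ≤ ε / 2 := hqK x hx
          _ ≤ |ε / 2| := le_abs_self _
      · simp [Set.indicator_of_notMem hx]
    calc eLpNorm (K.indicator q) 2 μ
        ≤ eLpNorm (K.indicator fun _ => ε / 2) 2 μ := eLpNorm_mono hpt
      _ = ‖(ε / 2 : ℝ)‖₊ * μ K ^ (1 / (2 : ℝ≥0∞).toReal) :=
          eLpNorm_indicator_const hKmeas (by norm_num) (by norm_num)
      _ ≤ ENNReal.ofReal (ε / 2) * 1 := by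
          refine mul_le_mul' (le_of_eq ?_) ?_
          · rw [show ((‖(ε / 2 : ℝ)‖₊ : ℝ≥0∞)) = ENNReal.ofReal ‖(ε / 2 : ℝ)‖ from (ofReal_norm _).symm, Real.norm_eq_abs, abs_of_pos (by positivity)]
          · calc μ K ^ (1 / (2 : ℝ≥0∞).toReal) ≤ (1 : ℝ≥0∞) ^ (1 / (2 : ℝ≥0∞).toReal) :=
                ENNReal.rpow_le_rpow prob_le_one (by rw [htoReal]; norm_num)
              _ = 1 := ENNReal.one_rpow _
      _ = ENNReal.ofReal (ε / 2) := mul_one _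
  have h2 : eLpNorm (Kᶜ.indicator q) 2 μ ≤ ENNReal.ofReal (2 * M * s) := by
    have hpt : ∀ x, ‖Kᶜ.indicator q x‖ ≤ ‖Kᶜ.indicator (fun _ => 2 * M) x‖ := by
      intro x
      by_cases hx : x ∈ Kᶜ
      · simp only [Set.indicator_of_mem hx, Real.norm_eq_abs]
        calc |q x| ≤ 2 * M := hqb x
          _ ≤ |2 * M| := le_abs_self _
      · simp [Set.indicator_of_notMem hx]
    have hrpow : μ Kᶜ ^ (1 / (2 : ℝ≥0∞).toReal) ≤ ENNReal.ofReal s := by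
      have hτs : ENNReal.ofReal τ ≤ ENNReal.ofReal (s ^ 2) :=
        ENNReal.ofReal_le_ofReal (min_le_right _ _)
      have hle : μ Kᶜ ^ (1 / (2 : ℝ≥0∞).toReal) ≤
          (ENNReal.ofReal (s ^ 2)) ^ (1 / (2 : ℝ≥0∞).toReal) :=
        ENNReal.rpow_le_rpow (hKcomp.trans hτs) (by rw [htoReal]; norm_num)
      refine hle.trans_eq ?_
      rw [ENNReal.ofReal_pow hs0.le, ← ENNReal.rpow_natCast (ENNReal.ofReal s) 2,
        ← ENNReal.rpow_mul]
      norm_num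
    calc eLpNorm (Kᶜ.indicator q) 2 μ
        ≤ eLpNorm (Kᶜ.indicator fun _ => 2 * M) 2 μ := eLpNorm_mono hpt
      _ = ‖(2 * M : ℝ)‖₊ * μ Kᶜ ^ (1 / (2 : ℝ≥0∞).toReal) :=
          eLpNorm_indicator_const hKmeas.compl (by norm_num) (by norm_num)
      _ ≤ ENNReal.ofReal (2 * M) * ENNReal.ofReal s := by
          refine mul_le_mul' (le_of_eq ?_) hrpow
          rw [show ((‖(2 * M : ℝ)‖₊ : ℝ≥0∞)) = ENNReal.ofReal ‖(2 * M : ℝ)‖ from (ofReal_norm _).symm, Real.norm_eq_abs, abs_of_nonneg (by positivity)]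
      _ = ENNReal.ofReal (2 * M * s) := by
          rw [← ENNReal.ofReal_mul (by positivity)]
  -- combine
  have hsplit : q = K.indicator q + Kᶜ.indicator q := (Set.indicator_self_add_compl K q).symm
  calc eLpNorm q 2 μ
      ≤ eLpNorm (K.indicator q) 2 μ + eLpNorm (Kᶜ.indicator q) 2 μ := by
        nth_rewrite 1 [hsplit]
        exact eLpNorm_add_le (hqm.indicator hKmeas) (hqm.indicator hKmeas.compl)
          (by norm_num)
    _ ≤ ENNReal.ofReal (ε / 2) + ENNReal.ofReal (2 * M * s) := add_le_add h1 h2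
    _ = ENNReal.ofReal (ε / 2 + 2 * M * s) := by
        rw [← ENNReal.ofReal_add (by positivity) (by positivity)]
    _ < ENNReal.ofReal ε := by
        rw [ENNReal.ofReal_lt_ofReal_iff hε]
        have h2M : 2 * M * s < ε / 2 := by
          have hden : (0:ℝ) < 2 * (2 * M + 1) := by positivity
          rw [hsdef, mul_div_assoc', div_lt_div_iff₀ hden (by norm_num : (0:ℝ) < 2)]
          nlinarith
        linarith

set_option maxHeartbeats 1000000 in
theorem stmt11 {X : Type*} [MetricSpace X] [CompactSpace X] [MeasurableSpace X]
    [BorelSpace X] (μ : Measure X) [IsProbabilityMeasure μ] (T : X ≃ₜ X)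
    (hT : MeasurePreserving T μ μ) (a : ℕ → ℕ) (ha : StrictMono a)
    (heq : ∀ τ > (0 : ℝ), ∃ K : Set X, IsCompact K ∧
      μ K > ENNReal.ofReal (1 - τ) ∧ ∀ ε > (0 : ℝ), ∃ δ > (0 : ℝ),
      ∀ x ∈ K, ∀ y ∈ K, dist x y < δ →
        ∀ n : ℕ, dist ((⇑T)^[a n] x) ((⇑T)^[a n] y) < ε) :
    (∀ f : C(X, ℝ), ∀ ε > (0 : ℝ), ∃ F : Finset ℕ, ∀ n : ℕ, ∃ m ∈ F,
        eLpNorm (fun x => f ((⇑T)^[a n] x) - f ((⇑T)^[a m] x)) 2 μ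
          < ENNReal.ofReal ε) ∧
    (∀ g : X → ℝ, MemLp g 2 μ → ∀ ε > (0 : ℝ), ∃ F : Finset ℕ, ∀ n : ℕ, ∃ m ∈ F,
        eLpNorm (fun x => g ((⇑T)^[a n] x) - g ((⇑T)^[a m] x)) 2 μ
          < ENNReal.ofReal ε) := by
  have key := stmt11_key μ T a heq
  refine ⟨key, ?_⟩
  intro g hg ε hε
  obtain ⟨f0, -, hsub, hf0c, -⟩ := hg.exists_hasCompactSupport_eLpNorm_sub_le
    (by norm_num : (2 : ℝ≥0∞) ≠ ∞)
    (show ENNReal.ofReal (ε / 8) ≠ 0 by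
      simp only [ne_eq, ENNReal.ofReal_eq_zero, not_le]; positivity)
  obtain ⟨F, hF⟩ := key ⟨f0, hf0c⟩ (ε / 2) (by positivity)
  refine ⟨F, fun n => ?_⟩
  obtain ⟨m, hm, hlt⟩ := hF n
  refine ⟨m, hm, ?_⟩
  have hmp : ∀ k : ℕ, MeasurePreserving ((⇑T)^[k]) μ μ := fun k => hT.iterate k
  have hdiff : AEStronglyMeasurable (g - f0) μ :=
    hg.aestronglyMeasurable.sub hf0c.aestronglyMeasurable
  have hdiff' : AEStronglyMeasurable (f0 - g) μ :=
    hf0c.aestronglyMeasurable.sub hg.aestronglyMeasurable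
  have e1 : eLpNorm ((g - f0) ∘ (⇑T)^[a n]) 2 μ = eLpNorm (g - f0) 2 μ :=
    eLpNorm_comp_measurePreserving hdiff (hmp (a n))
  have e3 : eLpNorm ((f0 - g) ∘ (⇑T)^[a m]) 2 μ = eLpNorm (g - f0) 2 μ := by
    rw [eLpNorm_comp_measurePreserving hdiff' (hmp (a m)), eLpNorm_sub_comm]
  have m1 : AEStronglyMeasurable ((g - f0) ∘ (⇑T)^[a n]) μ :=
    hdiff.comp_measurePreserving (hmp (a n))
  have m3 : AEStronglyMeasurable ((f0 - g) ∘ (⇑T)^[a m]) μ :=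
    hdiff'.comp_measurePreserving (hmp (a m))
  have m2 : AEStronglyMeasurable (fun x => f0 ((⇑T)^[a n] x) - f0 ((⇑T)^[a m] x)) μ :=
    ((hf0c.comp (T.continuous.iterate (a n))).sub
      (hf0c.comp (T.continuous.iterate (a m)))).aestronglyMeasurable
  have hdecomp : (fun x => g ((⇑T)^[a n] x) - g ((⇑T)^[a m] x)) =
      (g - f0) ∘ (⇑T)^[a n] +
      ((fun x => f0 ((⇑T)^[a n] x) - f0 ((⇑T)^[a m] x)) + (f0 - g) ∘ (⇑T)^[a m]) := by
    funext x
    simp only [Pi.add_apply, Pi.sub_apply, Function.comp_apply]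
    ring
  have hmid : eLpNorm (fun x => f0 ((⇑T)^[a n] x) - f0 ((⇑T)^[a m] x)) 2 μ
      < ENNReal.ofReal (ε / 2) := hlt
  calc eLpNorm (fun x => g ((⇑T)^[a n] x) - g ((⇑T)^[a m] x)) 2 μ
      ≤ eLpNorm ((g - f0) ∘ (⇑T)^[a n]) 2 μ +
        (eLpNorm (fun x => f0 ((⇑T)^[a n] x) - f0 ((⇑T)^[a m] x)) 2 μ +
         eLpNorm ((f0 - g) ∘ (⇑T)^[a m]) 2 μ) := by
        rw [hdecomp]
        exact (eLpNorm_add_le m1 (m2.add m3) (by norm_num)).trans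
          (add_le_add_right (eLpNorm_add_le m2 m3 (by norm_num)) _)
    _ ≤ ENNReal.ofReal (ε / 8) +
        (eLpNorm (fun x => f0 ((⇑T)^[a n] x) - f0 ((⇑T)^[a m] x)) 2 μ +
          ENNReal.ofReal (ε / 8)) := by
        refine add_le_add (e1.le.trans hsub) (add_le_add_right (e3.le.trans hsub) _)
    _ < ENNReal.ofReal (ε / 8) + (ENNReal.ofReal (ε / 2) + ENNReal.ofReal (ε / 8)) := by
        refine ENNReal.add_lt_add_left ENNReal.ofReal_ne_top ?_
        exact ENNReal.add_lt_add_right ENNReal.ofReal_ne_top hmid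
    _ ≤ ENNReal.ofReal ε := by
        rw [← ENNReal.ofReal_add (by positivity) (by positivity),
            ← ENNReal.ofReal_add (by positivity) (by positivity)]
        exact ENNReal.ofReal_le_ofReal (by linarith)
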